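/- Let k be a field of characteristic p > 0, G a finite group, and V a finite-dimensional kG-module with End_{kG}(V)/PEnd_{kG}(V) ≅ k. Then V has a unique (up to isomorphism) non-projective indecomposable direct summand V₀, and V ≅ V₀ ⊕ Q for some projective kG-module Q. -/

import Mathlib

/-- An endomorphism of a module over a ring `A` factors through a projective `A`-module. -/
def FactorsThroughProjective (A : Type) [Ring A] {M : Type} [AddCommGroup M] [Module A M]
    (f : M →ₗ[A] M) : Prop :=
  ∃ (P : Type) (_ : AddCommGroup P) (_ : Module A P),
    Module.Projective A P ∧ ∃ (α : M →ₗ[A] P) (β : P →ₗ[A] M), f = β.comp α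

/-- The stable endomorphism ring `End_A(M)/PEnd_A(M)` is isomorphic to `k`. -/
def StableEndTrivial (k : Type) [Field k] (A : Type) [Ring A] (M : Type) [AddCommGroup M]
    [Module k M] [Module A M] [SMulCommClass A k M] : Prop :=
  (¬ FactorsThroughProjective A (LinearMap.id : M →ₗ[A] M)) ∧
  ∀ f : M →ₗ[A] M, ∃ a : k, FactorsThroughProjective A (f - a • LinearMap.id)

/-- An `A`-module is indecomposable if it is nonzero and not the direct sum of two nonzero
submodules. -/
def IndecomposableModule (A M : Type) [Ring A] [AddCommGroup M] [Module A M] : Prop :=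
  Nontrivial M ∧ ∀ X Y : Submodule A M, IsCompl X Y → X = ⊥ ∨ Y = ⊥

section Aux

variable {A : Type} [Ring A]

theorem ftp_conj {M N : Type} [AddCommGroup M] [Module A M] [AddCommGroup N] [Module A N]
    {f : M →ₗ[A] M} (hf : FactorsThroughProjective A f)
    (u : M →ₗ[A] N) (v : N →ₗ[A] M) :
    FactorsThroughProjective A (u.comp (f.comp v)) := by
  obtain ⟨P, _, _, hP, α, β, hfab⟩ := hf
  exact ⟨P, _, _, hP, α.comp v, u.comp β, by rw [hfab]; ext x; simp⟩

theorem ftp_comp_right {M : Type} [AddCommGroup M] [Module A M]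
    {f : M →ₗ[A] M} (hf : FactorsThroughProjective A f) (g : M →ₗ[A] M) :
    FactorsThroughProjective A (f.comp g) := by
  obtain ⟨P, _, _, hP, α, β, hfab⟩ := hf
  exact ⟨P, _, _, hP, α.comp g, β, by rw [hfab]; ext x; simp⟩

theorem ftp_add {M : Type} [AddCommGroup M] [Module A M]
    {f g : M →ₗ[A] M} (hf : FactorsThroughProjective A f)
    (hg : FactorsThroughProjective A g) :
    FactorsThroughProjective A (f + g) := by
  obtain ⟨P, _, _, hP, α, β, hfab⟩ := hf
  obtain ⟨P', _, _, hP', α', β', hgab⟩ := hg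
  refine ⟨P × P', _, _, inferInstance, α.prod α', β.coprod β', ?_⟩
  rw [hfab, hgab]; ext x; simp

theorem ftp_neg {M : Type} [AddCommGroup M] [Module A M]
    {f : M →ₗ[A] M} (hf : FactorsThroughProjective A f) :
    FactorsThroughProjective A (-f) := by
  obtain ⟨P, _, _, hP, α, β, hfab⟩ := hf
  exact ⟨P, _, _, hP, α, -β, by rw [hfab]; ext x; simp⟩

theorem proj_of_ftp_id {M : Type} [AddCommGroup M] [Module A M]
    (h : FactorsThroughProjective A (LinearMap.id : M →ₗ[A] M)) :
    Module.Projective A M := by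
  obtain ⟨P, _, _, hP, α, β, hfab⟩ := h
  exact Module.Projective.of_split α β hfab.symm

theorem ftp_id_of_proj {M : Type} [AddCommGroup M] [Module A M]
    (h : Module.Projective A M) :
    FactorsThroughProjective A (LinearMap.id : M →ₗ[A] M) :=
  ⟨M, _, _, h, LinearMap.id, LinearMap.id, by ext x; rfl⟩

theorem proj_of_subsingleton {M : Type} [AddCommGroup M] [Module A M] [Subsingleton M] :
    Module.Projective A M :=
  proj_of_ftp_id ⟨A, _, _, inferInstance, 0, 0, by ext x; exact Subsingleton.elim _ _⟩

theorem isCompl_range_ker_of_idem {M : Type} [AddCommGroup M] [Module A M]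
    (σ : M →ₗ[A] M) (hσ : ∀ x, σ (σ x) = σ x) :
    IsCompl (LinearMap.range σ) (LinearMap.ker σ) := by
  constructor
  · rw [disjoint_iff]
    refine le_antisymm ?_ bot_le
    rintro x ⟨⟨y, rfl⟩, hx⟩
    have h0 : σ (σ y) = 0 := LinearMap.mem_ker.mp hx
    rw [hσ y] at h0
    simp [h0]
  · rw [codisjoint_iff]
    refine le_antisymm le_top ?_
    intro x _
    refine Submodule.mem_sup.2 ⟨σ x, ⟨x, rfl⟩, x - σ x, ?_, by abel⟩
    simp [LinearMap.mem_ker, map_sub, hσ x]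

end Aux

set_option maxHeartbeats 2000000 in
/-- If the stable endomorphism ring of the finite-dimensional `kG`-module `V` is
isomorphic to `k`, then `V` has a unique (up to isomorphism) non-projective indecomposable
direct summand `V₀`, and `V ≅ V₀ ⊕ Q` with `Q` projective. -/
theorem exists_unique_nonprojective_summand
    (p : ℕ) [Fact p.Prime] (k : Type) [Field k] [CharP k p]
    (G : Type) [Group G] [Fintype G]
    (V : Type) [AddCommGroup V] [Module k V] [Module (MonoidAlgebra k G) V]
    [IsScalarTower k (MonoidAlgebra k G) V] [SMulCommClass (MonoidAlgebra k G) k V]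
    [Module.Finite k V]
    (hV : StableEndTrivial k (MonoidAlgebra k G) V) :
    ∃ (V₀ : Type) (_ : AddCommGroup V₀) (_ : Module (MonoidAlgebra k G) V₀)
      (Q : Type) (_ : AddCommGroup Q) (_ : Module (MonoidAlgebra k G) Q),
      IndecomposableModule (MonoidAlgebra k G) V₀ ∧
      ¬ Module.Projective (MonoidAlgebra k G) V₀ ∧
      Module.Projective (MonoidAlgebra k G) Q ∧
      Nonempty (V ≃ₗ[MonoidAlgebra k G] (V₀ × Q)) ∧
      ∀ (W : Type) (_ : AddCommGroup W) (_ : Module (MonoidAlgebra k G) W),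
        IndecomposableModule (MonoidAlgebra k G) W →
        ¬ Module.Projective (MonoidAlgebra k G) W →
        (∃ (Q' : Type) (_ : AddCommGroup Q') (_ : Module (MonoidAlgebra k G) Q'),
          Module.Projective (MonoidAlgebra k G) Q' ∧
          Nonempty (V ≃ₗ[MonoidAlgebra k G] (W × Q'))) →
        Nonempty (W ≃ₗ[MonoidAlgebra k G] V₀) := by
  classical
  set A := MonoidAlgebra k G with hA
  -- chain conditions
  haveI : IsNoetherian k V := IsNoetherian.iff_fg.mpr ‹Module.Finite k V›
  haveI hNoeth : IsNoetherian A V := isNoetherian_of_tower k ‹IsNoetherian k V›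
  haveI hArt : IsArtinian A V := isArtinian_of_tower k inferInstance
  -- dimension function
  let d : Submodule A V → ℕ := fun X => Module.finrank k (X.restrictScalars k)
  have hdlt : ∀ {X X' : Submodule A V}, X' < X → d X' < d X := by
    intro X X' h
    refine Submodule.finrank_lt_finrank_of_lt ?_
    refine lt_of_le_of_ne ?_ ?_
    · exact fun x hx => h.le hx
    · intro hEq
      exact h.ne (Submodule.restrictScalars_injective k A V hEq)
  -- V is not projective
  have hVnp : ¬ Module.Projective A V := fun h => hV.1 (ftp_id_of_proj h)
  -- predicate: there exists a non-projective direct summand of dimension n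
  have hPex : ∃ n, ∃ X Y : Submodule A V, IsCompl X Y ∧ ¬ Module.Projective A X ∧ d X = n := by
    refine ⟨d ⊤, ⊤, ⊥, isCompl_top_bot, ?_, rfl⟩
    intro hproj
    exact hVnp (Module.Projective.of_equiv (Submodule.topEquiv (R := A) (M := V)))
  let n₀ := Nat.find hPex
  obtain ⟨X, Y, hcompl, hXnp, hdX⟩ := Nat.find_spec hPex
  have hmin : ∀ C D : Submodule A V, IsCompl C D → ¬ Module.Projective A C → d X ≤ d C := by
    intro C D hCD hC
    rw [hdX]
    exact Nat.find_min' hPex ⟨C, D, hCD, hC, rfl⟩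
  -- projections
  let π : V →ₗ[A] X := Submodule.projectionOnto X Y hcompl
  let π' : V →ₗ[A] Y := Submodule.projectionOnto Y X hcompl.symm
  -- Y is projective
  have hYproj : Module.Projective A Y := by
    obtain ⟨a, ha⟩ := hV.2 (X.subtype.comp π)
    by_cases haz : a = 0
    · rw [haz] at ha
      simp only [zero_smul, sub_zero] at ha
      exfalso
      apply hXnp
      apply proj_of_ftp_id
      have := ftp_conj (A := A) ha π X.subtype
      have heq : π.comp ((X.subtype.comp π).comp X.subtype) = LinearMap.id := by
        ext x
        simp [π, Submodule.projectionOnto_apply_left]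
      rwa [heq] at this
    · apply proj_of_ftp_id
      have h1 := ftp_conj (A := A) ha π' Y.subtype
      have heq : π'.comp (((X.subtype.comp π) - a • LinearMap.id).comp Y.subtype)
          = -(a • LinearMap.id) := by
        ext y
        simp [π', Submodule.projectionOnto_apply_right,
          Submodule.projectionOnto_apply_of_mem_right,
          Submodule.projectionOnto_apply_left]
      rw [heq] at h1
      obtain ⟨P, _, _, hP, α, β, hfab⟩ := h1
      refine ⟨P, _, _, hP, α, (-a)⁻¹ • β, ?_⟩
      refine LinearMap.ext fun y => ?_
      have hy : β (α y) = -(a • y) := by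
        have h := LinearMap.congr_fun hfab y
        simp only [LinearMap.comp_apply, LinearMap.neg_apply, LinearMap.smul_apply,
          LinearMap.id_apply] at h
        exact h.symm
      simp only [LinearMap.id_apply, LinearMap.comp_apply, LinearMap.smul_apply, hy]
      rw [smul_neg, smul_smul, inv_neg, neg_mul, inv_mul_cancel₀ haz]
      simp
  -- X is nontrivial
  have hXne : X ≠ ⊥ := by
    intro h
    apply hXnp
    haveI : Subsingleton X := by rw [h]; infer_instance
    exact proj_of_subsingleton
  haveI hXnt : Nontrivial X := Submodule.nontrivial_iff_ne_bot.mpr hXne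
  -- helper for indecomposability
  have hsummand : ∀ C D : Submodule A V, C ≤ X → D ≤ X → C ⊔ D = X → C ⊓ D = ⊥ →
      C ≠ X → ¬ Module.Projective A C → False := by
    intro C D hCX hDX hsup hinf hne hCnp
    have hdisj : C ⊓ (D ⊔ Y) = ⊥ := by
      have hmod : X ⊓ Y ⊔ D = X ⊓ (Y ⊔ D) := inf_sup_assoc_of_le Y hDX
      have hXY : X ⊓ Y = ⊥ := disjoint_iff.mp hcompl.disjoint
      have h1 : C ⊓ (D ⊔ Y) ≤ D := by
        have h2 : C ⊓ (D ⊔ Y) ≤ X ⊓ (Y ⊔ D) :=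
          le_inf (le_trans inf_le_left hCX) (by rw [sup_comm]; exact inf_le_right)
        rw [← hmod, hXY, bot_sup_eq] at h2
        exact h2
      have h3 : C ⊓ (D ⊔ Y) ≤ C ⊓ D := le_inf inf_le_left h1
      rw [hinf] at h3
      exact le_antisymm h3 bot_le
    have hcodis : C ⊔ (D ⊔ Y) = ⊤ := by
      rw [← sup_assoc, hsup]
      exact codisjoint_iff.mp hcompl.codisjoint
    have hCc : IsCompl C (D ⊔ Y) := ⟨disjoint_iff.mpr hdisj, codisjoint_iff.mpr hcodis⟩
    have hle := hmin C (D ⊔ Y) hCc hCnp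
    have hlt := hdlt (lt_of_le_of_ne hCX hne)
    omega
  have hXind : IndecomposableModule A X := by
    refine ⟨hXnt, ?_⟩
    intro B C hBC
    by_contra hcon
    push_neg at hcon
    obtain ⟨hB, hC⟩ := hcon
    set B' := B.map X.subtype with hB'
    set C' := C.map X.subtype with hC'
    have hinj := Submodule.injective_subtype X
    have hB'le : B' ≤ X := Submodule.map_subtype_le X B
    have hC'le : C' ≤ X := Submodule.map_subtype_le X C
    have hsup : B' ⊔ C' = X := by
      rw [hB', hC', ← Submodule.map_sup, codisjoint_iff.mp hBC.codisjoint,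
        Submodule.map_subtype_top]
    have hinf : B' ⊓ C' = ⊥ := by
      rw [hB', hC', ← Submodule.map_inf _ hinj, disjoint_iff.mp hBC.disjoint,
        Submodule.map_bot]
    have hnotboth : ¬ (Module.Projective A B' ∧ Module.Projective A C') := by
      rintro ⟨h1, h2⟩
      apply hXnp
      haveI hp1 : Module.Projective A B :=
        Module.Projective.of_equiv (Submodule.equivMapOfInjective X.subtype hinj B).symm
      haveI hp2 : Module.Projective A C :=
        Module.Projective.of_equiv (Submodule.equivMapOfInjective X.subtype hinj C).symm
      exact Module.Projective.of_equiv (Submodule.prodEquivOfIsCompl B C hBC)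
    have hBbot : B' ≠ ⊥ := by
      intro h
      apply hB
      have : B ≤ LinearMap.ker X.subtype := by
        intro x hx
        have : X.subtype x ∈ B' := Submodule.mem_map_of_mem hx
        rw [h] at this
        simpa [LinearMap.mem_ker] using this
      rw [LinearMap.ker_eq_bot.mpr hinj, le_bot_iff] at this
      exact this
    have hCbot : C' ≠ ⊥ := by
      intro h
      apply hC
      have : C ≤ LinearMap.ker X.subtype := by
        intro x hx
        have : X.subtype x ∈ C' := Submodule.mem_map_of_mem hx
        rw [h] at this
        simpa [LinearMap.mem_ker] using this
      rw [LinearMap.ker_eq_bot.mpr hinj, le_bot_iff] at this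
      exact this
    have hB'ne : B' ≠ X := by
      intro h
      apply hCbot
      have hle : C' ≤ B' := h ▸ hC'le
      have h2 : C' ≤ B' ⊓ C' := le_inf hle le_rfl
      rw [hinf, le_bot_iff] at h2
      exact h2
    have hC'ne : C' ≠ X := by
      intro h
      apply hBbot
      have : B' ≤ C' := h ▸ hB'le
      have h2 : B' ≤ B' ⊓ C' := le_inf le_rfl this
      rw [hinf, le_bot_iff] at h2
      exact h2
    by_cases hBp : Module.Projective A B'
    · have hCp : ¬ Module.Projective A C' := fun h => hnotboth ⟨hBp, h⟩
      exact hsummand C' B' hC'le hB'le (by rw [sup_comm]; exact hsup)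
        (by rw [inf_comm]; exact hinf) hC'ne hCp
    · exact hsummand B' C' hB'le hC'le hsup hinf hB'ne hBp
  -- assemble existence
  refine ⟨X, inferInstance, inferInstance, Y, inferInstance, inferInstance,
    hXind, hXnp, hYproj, ⟨(Submodule.prodEquivOfIsCompl X Y hcompl).symm⟩, ?_⟩
  -- uniqueness
  intro W _ _ hWind hWnp ⟨Q', _, _, hQ'proj, ⟨e'⟩⟩
  let e : V ≃ₗ[A] X × Y := (Submodule.prodEquivOfIsCompl X Y hcompl).symm
  let πX : V →ₗ[A] X := (LinearMap.fst A X Y).comp e.toLinearMap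
  let ιX : X →ₗ[A] V := e.symm.toLinearMap.comp (LinearMap.inl A X Y)
  let πW : V →ₗ[A] W := (LinearMap.fst A W Q').comp e'.toLinearMap
  let ιW : W →ₗ[A] V := e'.symm.toLinearMap.comp (LinearMap.inl A W Q')
  let πQ' : V →ₗ[A] Q' := (LinearMap.snd A W Q').comp e'.toLinearMap
  let ιQ' : Q' →ₗ[A] V := e'.symm.toLinearMap.comp (LinearMap.inr A W Q')
  have hπιX : ∀ x : X, πX (ιX x) = x := by intro x; simp [πX, ιX]
  have hWQ' : ∀ v : V, ιW (πW v) + ιQ' (πQ' v) = v := by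
    intro v
    show e'.symm ((e' v).1, 0) + e'.symm (0, (e' v).2) = v
    rw [← map_add]
    simp
  let φ : X →ₗ[A] W := πW.comp ιX
  let ψ : W →ₗ[A] X := πX.comp ιW
  let g : X →ₗ[A] X := ψ.comp φ
  -- g - id factors through projective
  have hgid : FactorsThroughProjective A (g - LinearMap.id) := by
    refine ⟨Q', _, _, hQ'proj, πQ'.comp ιX, -(πX.comp ιQ'), ?_⟩
    ext x
    have h1 : ιW (πW (ιX x)) = ιX x - ιQ' (πQ' (ιX x)) := by
      have := hWQ' (ιX x); rw [eq_sub_iff_add_eq]; exact this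
    simp only [LinearMap.sub_apply, LinearMap.comp_apply, LinearMap.id_apply,
      LinearMap.neg_apply, g, ψ, φ]
    rw [h1, map_sub, hπιX]
    abel
  -- powers of g are id modulo projectives
  have hgpow : ∀ n : ℕ, FactorsThroughProjective A (g ^ n - LinearMap.id) := by
    intro n
    induction n with
    | zero =>
      simp only [pow_zero]
      have hz : (1 : X →ₗ[A] X) - LinearMap.id = 0 := by
        ext x; simp [LinearMap.sub_apply]
      rw [hz]
      exact ⟨A, _, _, inferInstance, 0, 0, by ext x; simp⟩
    | succ n ih =>
      have hstep : g ^ (n + 1) - LinearMap.id = (g ^ n - LinearMap.id).comp g +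
          (g - LinearMap.id) := by
        ext x
        simp [pow_succ, Module.End.mul_apply, LinearMap.sub_apply, LinearMap.comp_apply]
      rw [hstep]
      exact ftp_add (ftp_comp_right ih g) hgid
  -- Fitting: g is bijective
  haveI : IsNoetherian A X := isNoetherian_of_submodule_of_noetherian A V X hNoeth
  haveI : IsArtinian A X := inferInstance
  obtain ⟨N, hN⟩ := Filter.eventually_atTop.mp (LinearMap.eventually_isCompl_ker_pow_range_pow g)
  have hfit := hN (N + 1) (Nat.le_succ N)
  have hbij : Function.Bijective g := by
    rcases hXind.2 _ _ hfit with hker | hran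
    · have hinj : Function.Injective (g ^ (N + 1)) := LinearMap.ker_eq_bot.mp hker
      have hginj : Function.Injective g := by
        intro x y hxy
        apply hinj
        have : (g ^ (N + 1)) = (g ^ N).comp g := by rw [pow_succ]; rfl
        rw [this]
        simp [LinearMap.comp_apply, hxy]
      exact ⟨hginj, IsArtinian.surjective_of_injective_endomorphism g hginj⟩
    · exfalso
      apply hXnp
      have hg0 : g ^ (N + 1) = 0 := LinearMap.range_eq_bot.mp hran
      have := hgpow (N + 1)
      rw [hg0] at this
      have h2 : (0 : X →ₗ[A] X) - LinearMap.id = -LinearMap.id := by ext x; simp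
      rw [h2] at this
      obtain ⟨P, _, _, hP, α, β, hfab⟩ := this
      refine proj_of_ftp_id ⟨P, _, _, hP, α, -β, ?_⟩
      refine LinearMap.ext fun x => ?_
      have h := LinearMap.congr_fun hfab x
      simp only [LinearMap.neg_apply, LinearMap.comp_apply, LinearMap.id_apply] at h ⊢
      rw [← h, neg_neg]
  let geq : X ≃ₗ[A] X := LinearEquiv.ofBijective g hbij
  let g' : X →ₗ[A] X := geq.symm.toLinearMap
  have hg'g : ∀ x, g' (g x) = x := fun x => geq.symm_apply_apply x
  have hgg' : ∀ x, g (g' x) = x := fun x => geq.apply_symm_apply x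
  let σ : W →ₗ[A] W := (φ.comp g').comp ψ
  have hgψφ : ∀ x, ψ (φ x) = g x := fun x => rfl
  have hσidem : ∀ w, σ (σ w) = σ w := by
    intro w
    show φ (g' (ψ (φ (g' (ψ w))))) = φ (g' (ψ w))
    rw [hgψφ, hgg']
  rcases hWind.2 _ _ (isCompl_range_ker_of_idem σ hσidem) with hσran | hσker
  · exfalso
    have hσ0 : σ = 0 := LinearMap.range_eq_bot.mp hσran
    have hgg : ∀ z : X, g z = 0 := by
      intro z
      have h1 : ψ (σ (φ z)) = g (g' (g z)) := rfl
      rw [hσ0, hgg'] at h1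
      simpa using h1.symm
    obtain ⟨x, y, hxy⟩ := hXnt
    apply hxy
    apply hbij.1
    rw [hgg x, hgg y]
  · have hσinj : Function.Injective σ := LinearMap.ker_eq_bot.mp hσker
    have hσid : ∀ w, σ w = w := by
      intro w
      apply hσinj
      exact hσidem w
    exact ⟨(LinearEquiv.ofLinear φ (g'.comp ψ)
      (LinearMap.ext fun w => hσid w) (LinearMap.ext fun x => hg'g x)).symm⟩
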